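/- Let n ≥ 3 and suppose self-adjoint involutions A_1,…,A_n (A_i² = 1) satisfy A_i = α_i A_{i+1} − β_i A_n for i = 1,…,n−2, where α_i = sin(πi/n)/sin(π(i+1)/n), β_i = sin(π/n)/sin(π(i+1)/n). Suppose further that A_2 = cos(π/n)σ_z⊗1 + sin(π/n)σ_x⊗1 and A_n = −cos(π/n)σ_z⊗1 + sin(π/n)σ_x⊗1 on a Hilbert space ℂ²⊗H''. Then A_i = cos(π(i−1)/n)σ_z⊗1 + sin(π(i−1)/n)σ_x⊗1 for all i = 1,…,n. -/

import Mathlib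

open Real Matrix Kronecker

def sigmaZ : Matrix (Fin 2) (Fin 2) ℂ := !![1, 0; 0, -1]
def sigmaX : Matrix (Fin 2) (Fin 2) ℂ := !![0, 1; 1, 0]

noncomputable def lgAlpha (n i : ℕ) : ℝ := Real.sin (π * i / n) / Real.sin (π * (i + 1) / n)
noncomputable def lgBeta (n i : ℕ) : ℝ := Real.sin (π / n) / Real.sin (π * (i + 1) / n)

lemma trig1 (x y : ℝ) : Real.sin (y + x) * Real.cos (y - x) =
    Real.sin y * Real.cos y + Real.sin x * Real.cos x := by
  rw [Real.sin_add, Real.cos_sub]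
  linear_combination (Real.sin y * Real.cos y) * (Real.sin_sq_add_cos_sq x)
    + (Real.sin x * Real.cos x) * (Real.sin_sq_add_cos_sq y)

lemma trig2 (x y : ℝ) : Real.sin (y + x) * Real.sin (y - x) =
    Real.sin y * Real.sin y - Real.sin x * Real.sin x := by
  rw [Real.sin_add, Real.sin_sub]
  linear_combination (Real.sin y * Real.sin y) * (Real.sin_sq_add_cos_sq x)
    - (Real.sin x * Real.sin x) * (Real.sin_sq_add_cos_sq y)

theorem selftest_all_observables (n m : ℕ) (hn : 3 ≤ n)
    (A : ℕ → Matrix (Fin 2 × Fin m) (Fin 2 × Fin m) ℂ)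
    (hherm : ∀ i, 1 ≤ i → i ≤ n → (A i).IsHermitian)
    (hinv : ∀ i, 1 ≤ i → i ≤ n → A i * A i = 1)
    (hrec : ∀ i, 1 ≤ i → i ≤ n - 2 →
      A i = ((lgAlpha n i : ℝ) : ℂ) • A (i + 1) - ((lgBeta n i : ℝ) : ℂ) • A n)
    (hA2 : A 2 = ((Real.cos (π / n) : ℝ) : ℂ) • (sigmaZ ⊗ₖ (1 : Matrix (Fin m) (Fin m) ℂ)) +
      ((Real.sin (π / n) : ℝ) : ℂ) • (sigmaX ⊗ₖ (1 : Matrix (Fin m) (Fin m) ℂ)))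
    (hAn : A n = ((-Real.cos (π / n) : ℝ) : ℂ) • (sigmaZ ⊗ₖ (1 : Matrix (Fin m) (Fin m) ℂ)) +
      ((Real.sin (π / n) : ℝ) : ℂ) • (sigmaX ⊗ₖ (1 : Matrix (Fin m) (Fin m) ℂ))) :
    ∀ i, 1 ≤ i → i ≤ n →
      A i = ((Real.cos (π * ((i : ℝ) - 1) / n) : ℝ) : ℂ) •
          (sigmaZ ⊗ₖ (1 : Matrix (Fin m) (Fin m) ℂ)) +
        ((Real.sin (π * ((i : ℝ) - 1) / n) : ℝ) : ℂ) •
          (sigmaX ⊗ₖ (1 : Matrix (Fin m) (Fin m) ℂ)) := by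
  have hn0 : (0:ℝ) < n := by positivity
  set Z : Matrix (Fin 2 × Fin m) (Fin 2 × Fin m) ℂ := sigmaZ ⊗ₖ 1 with hZ
  set X : Matrix (Fin 2 × Fin m) (Fin 2 × Fin m) ℂ := sigmaX ⊗ₖ 1 with hX
  have hsin : ∀ j : ℕ, 1 ≤ j → j ≤ n - 1 → 0 < Real.sin (π * j / n) := by
    intro j h1 h2
    apply Real.sin_pos_of_pos_of_lt_pi
    · have : (1:ℝ) ≤ j := by exact_mod_cast h1
      positivity
    · have hj : (j:ℝ) < n := by
        have : j < n := by omega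
        exact_mod_cast this
      rw [div_lt_iff₀ hn0]
      nlinarith [Real.pi_pos]
  have key : ∀ j : ℕ, 1 ≤ j → j ≤ n - 1 →
      A j = ((Real.cos (π * ((j : ℝ) - 1) / n) : ℝ) : ℂ) • Z +
        ((Real.sin (π * ((j : ℝ) - 1) / n) : ℝ) : ℂ) • X := by
    intro j h1
    induction j, h1 using Nat.le_induction with
    | base =>
      intro _
      have h2 : A 1 = ((lgAlpha n 1 : ℝ) : ℂ) • A 2 - ((lgBeta n 1 : ℝ) : ℂ) • A n :=
        hrec 1 le_rfl (by omega)
      rw [hA2, hAn] at h2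
      rw [h2]
      have hs2 : Real.sin (π * 2 / n) ≠ 0 := by
        have := hsin 2 (by omega) (by omega)
        push_cast at this ⊢; linarith
      have hcZ : lgAlpha n 1 * Real.cos (π / n) + lgBeta n 1 * Real.cos (π / n)
          = Real.cos (π * ((1:ℝ) - 1) / n) := by
        simp only [lgAlpha, lgBeta]
        norm_num
        rw [show π * 2 / (n:ℝ) = 2 * (π / n) by ring, Real.sin_two_mul] at hs2 ⊢
        have hsa : Real.sin (π / n) ≠ 0 := fun h => hs2 (by rw [h]; ring)
        have hca : Real.cos (π / n) ≠ 0 := fun h => hs2 (by rw [h]; ring)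
        field_simp
        ring
      have hcX : lgAlpha n 1 * Real.sin (π / n) - lgBeta n 1 * Real.sin (π / n)
          = Real.sin (π * ((1:ℝ) - 1) / n) := by
        simp only [lgAlpha, lgBeta]
        norm_num
      have hcZ' := congrArg (Complex.ofReal) hcZ
      have hcX' := congrArg (Complex.ofReal) hcX
      push_cast at hcZ' hcX'
      match_scalars
      · push_cast
        linear_combination hcZ'
      · push_cast
        linear_combination hcX'
    | succ j hj ih =>
      intro hj1
      have hjn : j ≤ n - 1 := by omega
      have hij := ih hjn
      have hrecj := hrec j hj (by omega)
      rw [hij, hAn] at hrecj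
      have hsj := hsin j hj hjn
      have hsj1 := hsin (j+1) (by omega) (by omega)
      have hsj1' : Real.sin (π * ((j:ℝ) + 1) / n) ≠ 0 := by push_cast at hsj1; linarith
      have hα : lgAlpha n j ≠ 0 := by
        simp only [lgAlpha]
        exact div_ne_zero (ne_of_gt hsj) hsj1'
      have hcZ : lgAlpha n j * Real.cos (π * (j:ℝ) / n) + lgBeta n j * Real.cos (π / n)
          = Real.cos (π * ((j:ℝ) - 1) / n) := by
        simp only [lgAlpha, lgBeta]
        push_cast
        rw [div_mul_eq_mul_div, div_mul_eq_mul_div, ← add_div, div_eq_iff hsj1']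
        have e1 : π * ((j:ℝ) + 1) / n = π * (j:ℝ) / n + π / n := by ring
        have e2 : π * ((j:ℝ) - 1) / n = π * (j:ℝ) / n - π / n := by ring
        rw [e1, e2]
        linear_combination -trig1 (π / n) (π * j / n)
      have hcX : lgAlpha n j * Real.sin (π * (j:ℝ) / n) - lgBeta n j * Real.sin (π / n)
          = Real.sin (π * ((j:ℝ) - 1) / n) := by
        simp only [lgAlpha, lgBeta]
        push_cast
        rw [div_mul_eq_mul_div, div_mul_eq_mul_div, div_sub_div_same, div_eq_iff hsj1']
        have e1 : π * ((j:ℝ) + 1) / n = π * (j:ℝ) / n + π / n := by ring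
        have e2 : π * ((j:ℝ) - 1) / n = π * (j:ℝ) / n - π / n := by ring
        rw [e1, e2]
        linear_combination -trig2 (π / n) (π * j / n)
      have htgt : ((lgAlpha n j : ℝ) : ℂ) •
            (((Real.cos (π * ((j:ℝ) + 1 - 1) / n) : ℝ) : ℂ) • Z +
             ((Real.sin (π * ((j:ℝ) + 1 - 1) / n) : ℝ) : ℂ) • X)
          - ((lgBeta n j : ℝ) : ℂ) •
            (((-Real.cos (π / n) : ℝ) : ℂ) • Z + ((Real.sin (π / n) : ℝ) : ℂ) • X)
          = ((Real.cos (π * ((j:ℝ) - 1) / n) : ℝ) : ℂ) • Z +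
            ((Real.sin (π * ((j:ℝ) - 1) / n) : ℝ) : ℂ) • X := by
        have e0 : (j:ℝ) + 1 - 1 = (j:ℝ) := by ring
        rw [e0]
        have hcZ' := congrArg (Complex.ofReal) hcZ
        have hcX' := congrArg (Complex.ofReal) hcX
        push_cast at hcZ' hcX'
        match_scalars
        · push_cast
          linear_combination hcZ'
        · push_cast
          linear_combination hcX'
      have hcancel : ((lgAlpha n j : ℝ) : ℂ) • A (j + 1) = ((lgAlpha n j : ℝ) : ℂ) •
            (((Real.cos (π * ((j:ℝ) + 1 - 1) / n) : ℝ) : ℂ) • Z +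
             ((Real.sin (π * ((j:ℝ) + 1 - 1) / n) : ℝ) : ℂ) • X) := by
        have h := hrecj.symm.trans htgt.symm
        exact sub_left_injective h
      have hαC : ((lgAlpha n j : ℝ) : ℂ) ≠ 0 := by exact_mod_cast hα
      have hfin := smul_right_injective (Matrix (Fin 2 × Fin m) (Fin 2 × Fin m) ℂ) hαC hcancel
      push_cast
      push_cast at hfin
      exact hfin
  intro i hi1 hin
  rcases eq_or_lt_of_le hin with heq | hlt
  · rw [heq, hAn]
    have hc : -Real.cos (π / n) = Real.cos (π * ((n:ℝ) - 1) / n) := by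
      have e : π * ((n:ℝ) - 1) / n = π - π / n := by
        field_simp
      rw [e, Real.cos_pi_sub]
    have hs : Real.sin (π / n) = Real.sin (π * ((n:ℝ) - 1) / n) := by
      have e : π * ((n:ℝ) - 1) / n = π - π / n := by
        field_simp
      rw [e, Real.sin_pi_sub]
    rw [hc, hs]
  · exact key i hi1 (by omega)
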